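/- Let p_1, p_2, p_3, p_4 be pairwise distinct nonzero complex numbers. In the polynomial ring ℂ[a,b] graded by total degree, let K be the ideal generated by the three quadratic forms a·b, (p_1·a + b)·(p_2·a + b), and (p_3·a + b)·(p_4·a + b). Then the dimension of the degree-2 homogeneous component of ℂ[a,b]/K equals 1 if p_1·p_2 = p_3·p_4, and equals 0 if p_1·p_2 ≠ p_3·p_4. (This computation produces an equisingular family of weighted homogeneous surface singularities, with Seifert invariants (2,(2,2,3,3,7,7),(1,…,1)), in which the embedding dimension jumps from 3 to 4 along the discriminant p_1p_2 − p_3p_4 = 0; hence the embedding dimension is not a topological invariant.) -/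

import Mathlib

open MvPolynomial

/-- The dimension of the degree-`k` homogeneous component of `ℂ[a,b]/K`:
`dim_ℂ ℂ[a,b]_k − dim_ℂ (K ∩ ℂ[a,b]_k)`. -/
noncomputable def hdim2 (K : Ideal (MvPolynomial (Fin 2) ℂ)) (k : ℕ) : ℕ :=
  Module.finrank ℂ (MvPolynomial.homogeneousSubmodule (Fin 2) ℂ k) -
    Module.finrank ℂ
      (Submodule.restrictScalars ℂ K ⊓ MvPolynomial.homogeneousSubmodule (Fin 2) ℂ k :
        Submodule ℂ (MvPolynomial (Fin 2) ℂ))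

namespace Stmt18Aux

noncomputable abbrev m20 : Fin 2 →₀ ℕ := Finsupp.single 0 2
noncomputable abbrev m11 : Fin 2 →₀ ℕ := Finsupp.single 0 1 + Finsupp.single 1 1
noncomputable abbrev m02 : Fin 2 →₀ ℕ := Finsupp.single 1 2

lemma hc_mul (c g : MvPolynomial (Fin 2) ℂ) (hg : g.IsHomogeneous 2) :
    homogeneousComponent 2 (c * g) = C (coeff 0 c) * g := by
  conv_lhs => rw [← sum_homogeneousComponent c, Finset.sum_mul, map_sum]
  rw [Finset.sum_eq_single 0]
  · rw [homogeneousComponent_of_mem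
      ((mem_homogeneousSubmodule _ _).mpr ((homogeneousComponent_isHomogeneous 0 c).mul hg)),
      if_pos rfl, homogeneousComponent_zero]
  · intro i _ hi
    rw [homogeneousComponent_of_mem
      ((mem_homogeneousSubmodule _ _).mpr ((homogeneousComponent_isHomogeneous i c).mul hg)),
      if_neg (by omega)]
  · intro h
    simp at h

/-- the coordinate map on degree-2 polynomials -/
noncomputable def ψ : MvPolynomial (Fin 2) ℂ →ₗ[ℂ] (Fin 3 → ℂ) where
  toFun f := ![coeff m20 f, coeff m11 f, coeff m02 f]
  map_add' f g := by funext i; fin_cases i <;> simp [coeff_add]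
  map_smul' r f := by funext i; fin_cases i <;> simp [coeff_smul]

lemma ψ_apply (f : MvPolynomial (Fin 2) ℂ) :
    ψ f = ![coeff m20 f, coeff m11 f, coeff m02 f] := rfl

lemma degree_eq (d : Fin 2 →₀ ℕ) : d.degree = d 0 + d 1 := by
  rw [Finsupp.degree_apply, Finset.sum_subset (Finset.subset_univ _)]
  · simp [Fin.sum_univ_two]
  · intro i _ hi; simpa using hi

lemma mem_cases (d : Fin 2 →₀ ℕ) (h : d 0 + d 1 = 2) : d = m20 ∨ d = m11 ∨ d = m02 := by
  have h0 : d 0 = 2 ∧ d 1 = 0 ∨ d 0 = 1 ∧ d 1 = 1 ∨ d 0 = 0 ∧ d 1 = 2 := by omega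
  rcases h0 with ⟨a,b⟩|⟨a,b⟩|⟨a,b⟩
  · left; ext i; fin_cases i <;> simp [a, b, Finsupp.single_apply]
  · right; left; ext i; fin_cases i <;> simp [a, b, Finsupp.single_apply]
  · right; right; ext i; fin_cases i <;> simp [a, b, Finsupp.single_apply]

lemma ψ_injOn (f : MvPolynomial (Fin 2) ℂ)
    (hf : f ∈ homogeneousSubmodule (Fin 2) ℂ 2) (h0 : ψ f = 0) : f = 0 := by
  rw [mem_homogeneousSubmodule] at hf
  have c20 : coeff m20 f = 0 := congrFun h0 0
  have c11 : coeff m11 f = 0 := congrFun h0 1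
  have c02 : coeff m02 f = 0 := congrFun h0 2
  ext d
  rw [coeff_zero]
  by_cases hd : coeff d f = 0
  · exact hd
  · have := hf hd
    rw [show Finsupp.weight (1 : Fin 2 → ℕ) = Finsupp.weight (fun _ => 1) from rfl,
      ← Finsupp.degree_eq_weight_one, degree_eq] at this
    rcases mem_cases d this with rfl | rfl | rfl <;> assumption
  -- done

lemma finrank_map_ψ (S : Submodule ℂ (MvPolynomial (Fin 2) ℂ))
    (hS : S ≤ homogeneousSubmodule (Fin 2) ℂ 2) :
    Module.finrank ℂ (S.map ψ) = Module.finrank ℂ S := by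
  rw [← LinearMap.range_domRestrict]
  apply LinearMap.finrank_range_of_inj
  rw [← LinearMap.ker_eq_bot, LinearMap.ker_eq_bot']
  rintro ⟨f, hfS⟩ hf
  have : f = 0 := ψ_injOn f (hS hfS) (by simpa using hf)
  simpa using this

lemma range3 {α : Type*} (a b c : α) : Set.range ![a, b, c] = {a, b, c} := by
  ext x
  constructor
  · rintro ⟨i, rfl⟩; fin_cases i <;> simp
  · rintro (rfl | rfl | rfl)
    exacts [⟨0, rfl⟩, ⟨1, rfl⟩, ⟨2, rfl⟩]

lemma range2 {α : Type*} (a b : α) : Set.range ![a, b] = {a, b} := by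
  ext x
  constructor
  · rintro ⟨i, rfl⟩; fin_cases i <;> simp
  · rintro (rfl | rfl)
    exacts [⟨0, rfl⟩, ⟨1, rfl⟩]

lemma span_top (v₁ v₂ v₃ : Fin 3 → ℂ) (h1 : v₁ = ![1,0,0]) (h2 : v₂ = ![0,1,0])
    (h3 : v₃ = ![0,0,1]) : Submodule.span ℂ {v₁, v₂, v₃} = ⊤ := by
  rw [eq_top_iff]
  intro v _
  have hv : v = v 0 • v₁ + v 1 • v₂ + v 2 • v₃ := by
    subst h1 h2 h3; funext i; fin_cases i <;> simp
  rw [hv]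
  refine Submodule.add_mem _ (Submodule.add_mem _ ?_ ?_) ?_ <;>
    exact Submodule.smul_mem _ _ (Submodule.subset_span (by simp))

-- coefficients of the generators
lemma coeff_g1 : ψ (X 0 * X 1 : MvPolynomial (Fin 2) ℂ) = ![0, 1, 0] := by
  funext i
  fin_cases i <;>
  · show coeff _ _ = _
    simp only [X, monomial_mul, coeff_monomial,
      Finsupp.ext_iff, Fin.forall_fin_two, Finsupp.single_apply, Finsupp.add_apply]
    norm_num

lemma coeff_g (p q : ℂ) :
    ψ ((C p * X 0 + X 1) * (C q * X 0 + X 1) : MvPolynomial (Fin 2) ℂ)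
      = ![p * q, p + q, 1] := by
  funext i
  fin_cases i <;>
  · show coeff _ _ = _
    simp only [C_apply, X, monomial_mul, add_mul, mul_add, coeff_add, coeff_monomial,
      Finsupp.ext_iff, Fin.forall_fin_two, Finsupp.single_apply, Finsupp.add_apply]
    norm_num
    try ring

lemma homog_g1 : (X 0 * X 1 : MvPolynomial (Fin 2) ℂ).IsHomogeneous 2 :=
  (isHomogeneous_X _ _).mul (isHomogeneous_X _ _)

lemma homog_g (p q : ℂ) :
    ((C p * X 0 + X 1) * (C q * X 0 + X 1) : MvPolynomial (Fin 2) ℂ).IsHomogeneous 2 := by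
  have h : ∀ r : ℂ, (C r * X 0 + X 1 : MvPolynomial (Fin 2) ℂ).IsHomogeneous 1 := fun r =>
    (((isHomogeneous_C _ _).mul (isHomogeneous_X _ _)).add (isHomogeneous_X _ _))
  exact (h p).mul (h q)

lemma ψ_mono20 : ψ (monomial m20 (1:ℂ)) = ![1,0,0] := by
  funext i
  fin_cases i <;>
  · rw [ψ_apply]
    simp only [coeff_monomial,
      Finsupp.ext_iff, Fin.forall_fin_two, Finsupp.single_apply, Finsupp.add_apply]
    norm_num

lemma ψ_mono11 : ψ (monomial m11 (1:ℂ)) = ![0,1,0] := by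
  funext i
  fin_cases i <;>
  · rw [ψ_apply]
    simp only [coeff_monomial,
      Finsupp.ext_iff, Fin.forall_fin_two, Finsupp.single_apply, Finsupp.add_apply]
    norm_num

lemma ψ_mono02 : ψ (monomial m02 (1:ℂ)) = ![0,0,1] := by
  funext i
  fin_cases i <;>
  · rw [ψ_apply]
    simp only [coeff_monomial,
      Finsupp.ext_iff, Fin.forall_fin_two, Finsupp.single_apply, Finsupp.add_apply]
    norm_num

lemma mono_mem (m : Fin 2 →₀ ℕ) (h : m.degree = 2) :
    monomial m (1:ℂ) ∈ homogeneousSubmodule (Fin 2) ℂ 2 :=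
  (mem_homogeneousSubmodule _ _).mpr (isHomogeneous_monomial _ h)

lemma map_H2 : (homogeneousSubmodule (Fin 2) ℂ 2).map ψ = ⊤ := by
  rw [eq_top_iff, ← span_top ![1,0,0] ![0,1,0] ![0,0,1] rfl rfl rfl]
  rw [Submodule.span_le]
  rintro v (rfl | rfl | rfl)
  · exact ⟨monomial m20 1, mono_mem _ (by simp [degree_eq, Finsupp.single_apply]), ψ_mono20⟩
  · exact ⟨monomial m11 1, mono_mem _ (by simp [degree_eq, Finsupp.single_apply]), ψ_mono11⟩
  · exact ⟨monomial m02 1, mono_mem _ (by simp [degree_eq, Finsupp.single_apply]), ψ_mono02⟩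

lemma finrank_H2 : Module.finrank ℂ (homogeneousSubmodule (Fin 2) ℂ 2) = 3 := by
  rw [← finrank_map_ψ _ le_rfl, map_H2, finrank_top]
  simp

end Stmt18Aux

open Stmt18Aux in
theorem stmt18 (p₁ p₂ p₃ p₄ : ℂ)
    (h₁ : p₁ ≠ 0) (h₂ : p₂ ≠ 0) (h₃ : p₃ ≠ 0) (h₄ : p₄ ≠ 0)
    (h₁₂ : p₁ ≠ p₂) (h₁₃ : p₁ ≠ p₃) (h₁₄ : p₁ ≠ p₄)
    (h₂₃ : p₂ ≠ p₃) (h₂₄ : p₂ ≠ p₄) (h₃₄ : p₃ ≠ p₄) :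
    hdim2 (Ideal.span
      {(X 0 * X 1 : MvPolynomial (Fin 2) ℂ),
        (C p₁ * X 0 + X 1) * (C p₂ * X 0 + X 1),
        (C p₃ * X 0 + X 1) * (C p₄ * X 0 + X 1)}) 2 =
      (if p₁ * p₂ = p₃ * p₄ then 1 else 0) := by
  set g₁ : MvPolynomial (Fin 2) ℂ := X 0 * X 1 with hg₁
  set g₂ : MvPolynomial (Fin 2) ℂ := (C p₁ * X 0 + X 1) * (C p₂ * X 0 + X 1) with hg₂
  set g₃ : MvPolynomial (Fin 2) ℂ := (C p₃ * X 0 + X 1) * (C p₄ * X 0 + X 1) with hg₃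
  have homog : ∀ g ∈ ({g₁, g₂, g₃} : Set (MvPolynomial (Fin 2) ℂ)),
      g ∈ homogeneousSubmodule (Fin 2) ℂ 2 := by
    rintro g (rfl | rfl | rfl)
    · exact (mem_homogeneousSubmodule _ _).mpr homog_g1
    · exact (mem_homogeneousSubmodule _ _).mpr (homog_g _ _)
    · exact (mem_homogeneousSubmodule _ _).mpr (homog_g _ _)
  -- Step A: the intersection is the ℂ-span of the generators
  have interEq :
      (Submodule.restrictScalars ℂ (Ideal.span {g₁, g₂, g₃})
        ⊓ homogeneousSubmodule (Fin 2) ℂ 2 : Submodule ℂ (MvPolynomial (Fin 2) ℂ))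
      = Submodule.span ℂ {g₁, g₂, g₃} := by
    apply le_antisymm
    · intro f hf
      rw [Submodule.mem_inf] at hf
      obtain ⟨hfK, hfH⟩ := hf
      rw [Submodule.restrictScalars_mem, ← Ideal.submodule_span_eq] at hfK
      rw [Submodule.mem_span_insert] at hfK
      obtain ⟨c₁, z, hz, rfl⟩ := hfK
      rw [Submodule.mem_span_insert] at hz
      obtain ⟨c₂, w, hw, rfl⟩ := hz
      rw [Submodule.mem_span_singleton] at hw
      obtain ⟨c₃, rfl⟩ := hw
      have key : c₁ • g₁ + (c₂ • g₂ + c₃ • g₃)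
          = (coeff 0 c₁) • g₁ + ((coeff 0 c₂) • g₂ + (coeff 0 c₃) • g₃) := by
        have hfix : homogeneousComponent 2 (c₁ • g₁ + (c₂ • g₂ + c₃ • g₃))
            = c₁ • g₁ + (c₂ • g₂ + c₃ • g₃) := by
          rw [homogeneousComponent_of_mem hfH, if_pos rfl]
        conv_lhs => rw [← hfix]
        simp only [map_add, smul_eq_mul]
        rw [hc_mul _ _ homog_g1, hc_mul _ _ (homog_g _ _), hc_mul _ _ (homog_g _ _)]
        simp only [smul_eq_C_mul]
        rfl
      rw [key]
      refine Submodule.add_mem _ ?_ (Submodule.add_mem _ ?_ ?_) <;>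
        exact Submodule.smul_mem _ _ (Submodule.subset_span (by simp))
    · rw [Submodule.span_le]
      intro g hg
      exact ⟨Submodule.restrictScalars_mem _ _ _ |>.mpr
        (Ideal.subset_span hg), homog g hg⟩
  -- Step B/C: compute finranks via ψ
  have spanle : Submodule.span ℂ {g₁, g₂, g₃} ≤ homogeneousSubmodule (Fin 2) ℂ 2 :=
    Submodule.span_le.mpr homog
  have mapSpan : (Submodule.span ℂ {g₁, g₂, g₃}).map ψ
      = Submodule.span ℂ {![0,1,0], ![p₁*p₂, p₁+p₂, 1], ![p₃*p₄, p₃+p₄, 1]} := by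
    rw [Submodule.map_span]
    congr 1
    rw [Set.image_insert_eq, Set.image_insert_eq, Set.image_singleton,
      coeff_g1, coeff_g, coeff_g]
  have hrank : Module.finrank ℂ
      (Submodule.span ℂ ({g₁, g₂, g₃} : Set (MvPolynomial (Fin 2) ℂ)))
      = if p₁ * p₂ = p₃ * p₄ then 2 else 3 := by
    rw [← finrank_map_ψ _ spanle, mapSpan]
    by_cases hpq : p₁ * p₂ = p₃ * p₄
    · rw [if_pos hpq]
      have hv₃ : (![p₃*p₄, p₃+p₄, 1] : Fin 3 → ℂ)
          = ![p₁*p₂, p₁+p₂, 1] + ((p₃+p₄) - (p₁+p₂)) • ![0,1,0] := by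
        funext i; fin_cases i <;> simp [hpq] <;> ring
      have hspan : Submodule.span ℂ ({![0,1,0], ![p₁*p₂, p₁+p₂, 1], ![p₃*p₄, p₃+p₄, 1]}
          : Set (Fin 3 → ℂ)) = Submodule.span ℂ {![0,1,0], ![p₁*p₂, p₁+p₂, 1]} := by
        apply le_antisymm
        · rw [Submodule.span_le]
          rintro v (rfl | rfl | rfl)
          · exact Submodule.subset_span (by simp)
          · exact Submodule.subset_span (by simp)
          · rw [hv₃]
            exact Submodule.add_mem _ (Submodule.subset_span (by simp))
              (Submodule.smul_mem _ _ (Submodule.subset_span (by simp)))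
        · apply Submodule.span_mono
          intro x hx
          simp only [Set.mem_insert_iff, Set.mem_singleton_iff] at hx ⊢
          tauto
      rw [hspan, show ({![0,1,0], ![p₁*p₂, p₁+p₂, 1]} : Set (Fin 3 → ℂ))
        = Set.range ![![0,1,0], ![p₁*p₂, p₁+p₂, 1]] from (range2 _ _).symm]
      rw [finrank_span_eq_card ?_]
      · simp
      · rw [linearIndependent_fin2]
        constructor
        · intro h
          have := congrFun h 2
          simp at this
        · intro a h
          have h2 := congrFun h 2
          simp at h2
          subst h2
          have h1 := congrFun h 1
          simp at h1
    · rw [if_neg hpq]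
      set A : Matrix (Fin 3) (Fin 3) ℂ :=
        ![![0,1,0], ![p₁*p₂, p₁+p₂, 1], ![p₃*p₄, p₃+p₄, 1]] with hA
      have hdet : A.det = p₃*p₄ - p₁*p₂ := by
        rw [Matrix.det_fin_three]
        simp [hA, Matrix.vecHead, Matrix.vecTail]
        ring
      have hdne : A.det ≠ 0 := by
        rw [hdet]
        exact sub_ne_zero.mpr (fun h => hpq h.symm)
      have hli : LinearIndependent ℂ (fun i => A i) :=
        Matrix.linearIndependent_rows_iff_isUnit.mpr
          ((Matrix.isUnit_iff_isUnit_det A).mpr (isUnit_iff_ne_zero.mpr hdne))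
      rw [show ({![0,1,0], ![p₁*p₂, p₁+p₂, 1], ![p₃*p₄, p₃+p₄, 1]} : Set (Fin 3 → ℂ))
        = Set.range (fun i => A i) from (range3 _ _ _).symm]
      rw [finrank_span_eq_card hli]
      simp
  -- assemble
  simp only [hdim2]
  rw [interEq, finrank_H2, hrank]
  by_cases hpq : p₁ * p₂ = p₃ * p₄ <;> simp [hpq]
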